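/- Let μ be a compact-finite deficient topological measure on a locally compact Hausdorff space X, K a compact set, and (f_α) a net of continuous nonnegative compactly supported functions on X with supp f_α ⊆ K for all α, converging uniformly to a continuous nonnegative function f with supp f ⊆ K. Then ∫_X f_α dμ → ∫_X f dμ, where for a continuous nonnegative compactly supported h, ∫_X h dμ := ∫₀^∞ μ(h⁻¹((t,∞))) dt. -/

import Mathlib

open MeasureTheory Set Filter Topology ENNReal

/-- A deficient topological measure on a topological space `X`: a set function with values in
`[0,∞]` (recorded on all sets, but constrained only on open and closed sets) that is finitely
additive on disjoint compact sets, inner regular on open sets with respect to compact sets,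
and outer regular on closed sets with respect to open sets. -/
structure DeficientTopologicalMeasure (X : Type*) [TopologicalSpace X] where
  m : Set X → ℝ≥0∞
  additive : ∀ ⦃C K : Set X⦄, IsCompact C → IsCompact K → Disjoint C K →
    m (C ∪ K) = m C + m K
  innerRegular : ∀ ⦃U : Set X⦄, IsOpen U →
    m U = ⨆ (K : Set X) (_ : IsCompact K) (_ : K ⊆ U), m K
  outerRegular : ∀ ⦃F : Set X⦄, IsClosed F →
    m F = ⨅ (U : Set X) (_ : IsOpen U) (_ : F ⊆ U), m U

section AuxLemmas

variable {X : Type*} [TopologicalSpace X] (μ : DeficientTopologicalMeasure X)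

lemma dtm_mono_co {C U : Set X} (hC : IsCompact C) (hU : IsOpen U) (h : C ⊆ U) :
    μ.m C ≤ μ.m U := by
  rw [μ.innerRegular hU]
  exact le_iSup₂_of_le C hC (le_iSup_of_le h le_rfl)

lemma dtm_mono_cc [T2Space X] {C K : Set X} (hC : IsCompact C) (hK : IsCompact K) (h : C ⊆ K) :
    μ.m C ≤ μ.m K := by
  rw [μ.outerRegular hC.isClosed, μ.outerRegular hK.isClosed]
  exact le_iInf₂ fun U hU => le_iInf fun hKU =>
    iInf₂_le_of_le U hU (iInf_le_of_le (h.trans hKU) le_rfl)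

lemma dtm_mono_oc [T2Space X] {U C : Set X} (hU : IsOpen U) (hC : IsCompact C) (h : U ⊆ C) :
    μ.m U ≤ μ.m C := by
  rw [μ.innerRegular hU]
  exact iSup₂_le fun L hL => iSup_le fun hLU => dtm_mono_cc μ hL hC (hLU.trans h)

lemma dtm_mono_oo {U V : Set X} (hU : IsOpen U) (hV : IsOpen V) (h : U ⊆ V) :
    μ.m U ≤ μ.m V := by
  rw [μ.innerRegular hU]
  exact iSup₂_le fun L hL => iSup_le fun hLU => dtm_mono_co μ hL hV (hLU.trans h)

lemma dtm_empty (hfin : μ.m ∅ ≠ ∞) : μ.m ∅ = 0 := by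
  have h := μ.additive isCompact_empty isCompact_empty (disjoint_empty _)
  rw [union_empty] at h
  by_contra h0
  exact absurd h (ne_of_lt (ENNReal.lt_add_right hfin h0))

lemma setlint_mono {s : Set ℝ} (hs : MeasurableSet s) {F G : ℝ → ℝ≥0∞}
    (h : ∀ t ∈ s, F t ≤ G t) : ∫⁻ t in s, F t ≤ ∫⁻ t in s, G t :=
  lintegral_mono_ae ((ae_restrict_iff' hs).mpr (ae_of_all _ h))

lemma setlint_le_const {s : Set ℝ} (hs : MeasurableSet s) {F : ℝ → ℝ≥0∞} {M : ℝ≥0∞}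
    (h : ∀ t ∈ s, F t ≤ M) : ∫⁻ t in s, F t ≤ M * volume s := by
  calc ∫⁻ t in s, F t ≤ ∫⁻ _ in s, M := setlint_mono hs h
  _ = M * volume s := setLIntegral_const s M

lemma lint_shift (g : ℝ → ℝ≥0∞) (c : ℝ) :
    ∫⁻ t in Ioi c, g (t - c) = ∫⁻ s in Ioi 0, g s := by
  rw [← lintegral_indicator measurableSet_Ioi, ← lintegral_indicator measurableSet_Ioi]
  have h : ∀ t, (Ioi c).indicator (fun t => g (t - c)) t = (Ioi 0).indicator g (t - c) := by
    intro t
    by_cases ht : t ∈ Ioi c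
    · rw [indicator_of_mem ht, indicator_of_mem (by simpa [sub_pos] using ht)]
    · rw [indicator_of_notMem ht, indicator_of_notMem (by simpa [sub_pos] using ht)]
  simp_rw [h]
  exact lintegral_sub_right_eq_self ((Ioi (0:ℝ)).indicator g) c

lemma lint_shift' (g : ℝ → ℝ≥0∞) (c : ℝ) :
    ∫⁻ t in Ioi (0:ℝ), g (t + c) = ∫⁻ s in Ioi c, g s := by
  rw [← lintegral_indicator measurableSet_Ioi, ← lintegral_indicator measurableSet_Ioi]
  have h : ∀ t, (Ioi (0:ℝ)).indicator (fun t => g (t + c)) t = (Ioi c).indicator g (t + c) := by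
    intro t
    by_cases ht : t ∈ Ioi (0:ℝ)
    · rw [indicator_of_mem ht, indicator_of_mem (by simp at ht ⊢; linarith)]
    · rw [indicator_of_notMem ht, indicator_of_notMem (by simp at ht ⊢; linarith)]
  simp_rw [h]
  exact lintegral_add_right_eq_self ((Ioi c).indicator g) c

end AuxLemmas

/-- Let `μ` be a compact-finite deficient topological measure on a locally
compact Hausdorff space, `K` compact, and `(f_α)` a net of continuous nonnegative functions
with supports in `K` converging uniformly to a continuous nonnegative `f` with support in
`K`. Then `∫_X f_α dμ → ∫_X f dμ`, where `∫_X h dμ = ∫₀^∞ μ(h⁻¹((t,∞))) dt`. -/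
theorem stmt19 {X : Type*} [TopologicalSpace X] [LocallyCompactSpace X] [T2Space X]
    {ι : Type*} [Preorder ι] [IsDirected ι (· ≤ ·)] [Nonempty ι]
    (μ : DeficientTopologicalMeasure X)
    (hcf : ∀ K : Set X, IsCompact K → μ.m K < ∞)
    (K : Set X) (hK : IsCompact K)
    (f : ι → X → ℝ) (f₀ : X → ℝ)
    (hfc : ∀ α, Continuous (f α)) (hf₀c : Continuous f₀)
    (hf0 : ∀ α, ∀ x, 0 ≤ f α x) (hf₀0 : ∀ x, 0 ≤ f₀ x)
    (hfK : ∀ α, tsupport (f α) ⊆ K) (hf₀K : tsupport f₀ ⊆ K)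
    (hunif : TendstoUniformly f f₀ atTop) :
    Tendsto (fun α => ∫⁻ t in Ioi (0 : ℝ), μ.m (f α ⁻¹' (Ioi t))) atTop
      (nhds (∫⁻ t in Ioi (0 : ℝ), μ.m (f₀ ⁻¹' (Ioi t)))) := by
  classical
  obtain ⟨K', hK'c, hKK'⟩ := exists_compact_superset hK
  set M : ℝ≥0∞ := μ.m K' with hMdef
  have hMne : M ≠ ∞ := (hcf K' hK'c).ne
  have hopen : ∀ (g : X → ℝ), Continuous g → ∀ t : ℝ, IsOpen (g ⁻¹' Ioi t) :=
    fun g hg t => isOpen_Ioi.preimage hg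
  have hsub : ∀ (g : X → ℝ), tsupport g ⊆ K → ∀ t : ℝ, 0 < t → g ⁻¹' Ioi t ⊆ K' := by
    intro g hg t ht x hx
    have hx0 : g x ≠ 0 := ne_of_gt (lt_trans ht hx)
    exact interior_subset (hKK' (hg (subset_tsupport g (Function.mem_support.mpr hx0))))
  have hle : ∀ (g : X → ℝ), Continuous g → tsupport g ⊆ K → ∀ t : ℝ, 0 < t →
      μ.m (g ⁻¹' Ioi t) ≤ M := fun g hgc hgK t ht =>
    dtm_mono_oc μ (hopen g hgc t) hK'c (hsub g hgK t ht)
  have hempty : μ.m ∅ = 0 := dtm_empty μ (hcf ∅ isCompact_empty).ne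
  obtain ⟨B, hB⟩ := hK.exists_bound_of_continuousOn hf₀c.continuousOn
  set B' : ℝ := max B 1 with hB'def
  have hB'pos : (0:ℝ) < B' := lt_of_lt_of_le one_pos (le_max_right _ _)
  have hf₀le : ∀ x, f₀ x ≤ B' := by
    intro x
    by_cases hx : x ∈ K
    · exact le_trans (le_trans (le_abs_self _) (hB x hx)) (le_max_left _ _)
    · have h0 : f₀ x = 0 := image_eq_zero_of_notMem_tsupport (fun h => hx (hf₀K h))
      rw [h0]; exact le_of_lt hB'pos
  have hGzero : ∀ t ∈ Ioi (B' : ℝ), μ.m (f₀ ⁻¹' Ioi t) = 0 := by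
    intro t ht
    have he : f₀ ⁻¹' Ioi t = ∅ :=
      eq_empty_of_forall_notMem fun x hx =>
        absurd (lt_trans ht hx) (not_lt.mpr (hf₀le x))
    rw [he]; exact hempty
  set I₀ := ∫⁻ t in Ioi (0:ℝ), μ.m (f₀ ⁻¹' Ioi t) with hI₀def
  have hI₀ne : I₀ ≠ ∞ := by
    have hsplit : Ioi (0:ℝ) = Ioc 0 B' ∪ Ioi B' := (Ioc_union_Ioi_eq_Ioi hB'pos.le).symm
    have hbound : I₀ ≤ M * ENNReal.ofReal B' + 0 := by
      rw [hI₀def, hsplit]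
      refine le_trans (lintegral_union_le _ _ _) (add_le_add ?_ ?_)
      · calc ∫⁻ t in Ioc (0:ℝ) B', μ.m (f₀ ⁻¹' Ioi t)
            ≤ M * volume (Ioc (0:ℝ) B') :=
              setlint_le_const measurableSet_Ioc (fun t ht => hle f₀ hf₀c hf₀K t ht.1)
        _ = M * ENNReal.ofReal B' := by rw [Real.volume_Ioc, sub_zero]
      · calc ∫⁻ t in Ioi B', μ.m (f₀ ⁻¹' Ioi t)
            ≤ ∫⁻ _ in Ioi B', (0:ℝ≥0∞) :=
              setlint_mono measurableSet_Ioi (fun t ht => le_of_eq (hGzero t ht))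
        _ = 0 := lintegral_zero
    exact ne_top_of_le_ne_top (by
      rw [add_zero]
      exact ENNReal.mul_ne_top hMne ENNReal.ofReal_ne_top) hbound
  rw [ENNReal.tendsto_nhds hI₀ne]
  intro ε hε
  obtain ⟨δ, hδpos, hδ⟩ : ∃ δ : ℝ, 0 < δ ∧ M * ENNReal.ofReal δ ≤ ε := by
    by_cases hM0 : M = 0
    · exact ⟨1, one_pos, by simp [hM0]⟩
    by_cases hεtop : ε = ∞
    · exact ⟨1, one_pos, by simp [hεtop]⟩
    have hεR : 0 < ε.toReal := ENNReal.toReal_pos (ne_of_gt hε) hεtop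
    have hMden : (0:ℝ) < M.toReal + 1 := by positivity
    refine ⟨ε.toReal / (M.toReal + 1), by positivity, ?_⟩
    have hMeq : M = ENNReal.ofReal M.toReal := (ENNReal.ofReal_toReal hMne).symm
    nth_rewrite 1 [hMeq]
    rw [← ENNReal.ofReal_mul ENNReal.toReal_nonneg]
    calc ENNReal.ofReal (M.toReal * (ε.toReal / (M.toReal + 1)))
        ≤ ENNReal.ofReal ε.toReal := by
          apply ENNReal.ofReal_le_ofReal
          rw [mul_div_assoc'] at *
          rw [div_le_iff₀ hMden]
          nlinarith [ENNReal.toReal_nonneg (a := M)]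
    _ = ε := ENNReal.ofReal_toReal hεtop
  have hev := Metric.tendstoUniformly_iff.mp hunif δ hδpos
  have hsplitδ : Ioi (0:ℝ) = Ioc 0 δ ∪ Ioi δ := (Ioc_union_Ioi_eq_Ioi hδpos.le).symm
  filter_upwards [hev] with α hα
  have hdist : ∀ x, |f₀ x - f α x| < δ := by
    intro x; have := hα x; rwa [Real.dist_eq] at this
  -- (A) upper bound
  have hA : (∫⁻ t in Ioi (0:ℝ), μ.m (f α ⁻¹' Ioi t)) ≤ M * ENNReal.ofReal δ + I₀ := by
    rw [hsplitδ]
    refine le_trans (lintegral_union_le _ _ _) (add_le_add ?_ ?_)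
    · calc ∫⁻ t in Ioc (0:ℝ) δ, μ.m (f α ⁻¹' Ioi t)
          ≤ M * volume (Ioc (0:ℝ) δ) :=
            setlint_le_const measurableSet_Ioc (fun t ht => hle (f α) (hfc α) (hfK α) t ht.1)
      _ = M * ENNReal.ofReal δ := by rw [Real.volume_Ioc, sub_zero]
    · calc ∫⁻ t in Ioi δ, μ.m (f α ⁻¹' Ioi t)
          ≤ ∫⁻ t in Ioi δ, μ.m (f₀ ⁻¹' Ioi (t - δ)) := by
            refine setlint_mono measurableSet_Ioi (fun t _ => ?_)
            refine dtm_mono_oo μ (hopen _ (hfc α) t) (hopen _ hf₀c (t - δ)) ?_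
            intro x hx
            have h1 : t < f α x := hx
            have h2 := hdist x
            simp only [mem_preimage, mem_Ioi]
            cases abs_lt.mp h2 with
            | intro hl hr => linarith
      _ = I₀ := lint_shift (fun s => μ.m (f₀ ⁻¹' Ioi s)) δ
  -- (B) lower bound
  have hB2 : I₀ ≤ M * ENNReal.ofReal δ + ∫⁻ t in Ioi (0:ℝ), μ.m (f α ⁻¹' Ioi t) := by
    rw [hI₀def]
    nth_rewrite 1 [hsplitδ]
    refine le_trans (lintegral_union_le _ _ _) (add_le_add ?_ ?_)
    · calc ∫⁻ t in Ioc (0:ℝ) δ, μ.m (f₀ ⁻¹' Ioi t)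
          ≤ M * volume (Ioc (0:ℝ) δ) :=
            setlint_le_const measurableSet_Ioc (fun t ht => hle f₀ hf₀c hf₀K t ht.1)
      _ = M * ENNReal.ofReal δ := by rw [Real.volume_Ioc, sub_zero]
    · calc ∫⁻ t in Ioi δ, μ.m (f₀ ⁻¹' Ioi t)
          = ∫⁻ t in Ioi (0:ℝ), μ.m (f₀ ⁻¹' Ioi (t + δ)) :=
            (lint_shift' (fun s => μ.m (f₀ ⁻¹' Ioi s)) δ).symm
      _ ≤ ∫⁻ t in Ioi (0:ℝ), μ.m (f α ⁻¹' Ioi t) := by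
            refine setlint_mono measurableSet_Ioi (fun t _ => ?_)
            refine dtm_mono_oo μ (hopen _ hf₀c (t + δ)) (hopen _ (hfc α) t) ?_
            intro x hx
            have h1 : t + δ < f₀ x := hx
            have h2 := hdist x
            simp only [mem_preimage, mem_Ioi]
            cases abs_lt.mp h2 with
            | intro hl hr => linarith
  constructor
  · rw [tsub_le_iff_right]
    calc I₀ ≤ M * ENNReal.ofReal δ + ∫⁻ t in Ioi (0:ℝ), μ.m (f α ⁻¹' Ioi t) := hB2
    _ ≤ ε + ∫⁻ t in Ioi (0:ℝ), μ.m (f α ⁻¹' Ioi t) := add_le_add_left hδ _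
    _ = (∫⁻ t in Ioi (0:ℝ), μ.m (f α ⁻¹' Ioi t)) + ε := add_comm _ _
  · calc (∫⁻ t in Ioi (0:ℝ), μ.m (f α ⁻¹' Ioi t)) ≤ M * ENNReal.ofReal δ + I₀ := hA
    _ ≤ ε + I₀ := add_le_add_left hδ _
    _ = I₀ + ε := add_comm _ _
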